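/- Let J° = (l, r) be an open interval with l finite, and let β : J° → ℝ be a Borel function with β² locally integrable on J°. Define the scale function s(x) = ∫_c^x exp(∫_c^y β(z) dz) dy for some fixed c ∈ J°. If s(l) := lim_{x→l+} s(x) = -∞, then for every ε > 0 with l+ε ∈ J° one has ∫_l^{l+ε} (x - l)·β(x)² dx = ∞. -/

import Mathlib

open MeasureTheory Set Filter

/-- If the scale function `s(x) = ∫_c^x exp(∫_c^y β(z) dz) dy` on `J° = (l, r)`
(with `β²` locally integrable) satisfies `s(l) = -∞`, then for every `ε > 0` with `l + ε ∈ J°`,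
`∫_l^{l+ε} (x - l)·β(x)² dx = ∞`. -/
theorem stmt0 (l r c : ℝ) (hlr : l < r) (hc : c ∈ Ioo l r)
    (β : ℝ → ℝ) (hβ : Measurable β)
    (hloc : ∀ a b : ℝ, l < a → a ≤ b → b < r →
      IntegrableOn (fun x => (β x) ^ 2) (Icc a b) volume)
    (s : ℝ → ℝ)
    (hs : ∀ x ∈ Ioo l r, s x = ∫ y in c..x, Real.exp (∫ z in c..y, β z))
    (hsl : Tendsto s (nhdsWithin l (Ioi l)) atBot) :
    ∀ ε > (0:ℝ), l + ε < r →
      ∫⁻ x in Ioo l (l + ε), ENNReal.ofReal ((x - l) * (β x) ^ 2) = ⊤ := by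
  intro ε hε hεr
  by_contra hne
  obtain ⟨hlc, hcr⟩ := hc
  set K := (∫⁻ x in Ioo l (l + ε), ENNReal.ofReal ((x - l) * (β x) ^ 2)).toReal with hKdef
  set m := min (l + ε) ((l + c) / 2) with hmdef
  have hlm : l < m := lt_min (by linarith) (by linarith)
  have hmc : m < c := lt_of_le_of_lt (min_le_right _ _) (by linarith)
  have hmle : m ≤ l + ε := min_le_left _ _
  have hmr : m < r := hmc.trans hcr
  -- β is integrable on compact subintervals of (l, r)
  have hβL1 : ∀ a b : ℝ, l < a → a ≤ b → b < r → IntegrableOn β (Icc a b) volume := by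
    intro a b ha hab hb
    have hg : IntegrableOn (fun z => (1 + (β z) ^ 2) / 2) (Icc a b) volume :=
      ((integrable_const (1:ℝ)).add (hloc a b ha hab hb)).div_const 2
    refine hg.mono' (hβ.aestronglyMeasurable.restrict) ?_
    refine ae_of_all _ fun z => ?_
    rw [Real.norm_eq_abs]
    nlinarith [sq_nonneg (|β z| - 1), sq_abs (β z)]
  have hβII : ∀ a b : ℝ, l < a → a ≤ b → b < r → IntervalIntegrable β volume a b := by
    intro a b ha hab hb
    have h : IntegrableOn β (uIcc a b) volume := by
      rw [uIcc_of_le hab]; exact hβL1 a b ha hab hb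
    exact h.intervalIntegrable
  -- continuity of the primitive F
  set F := fun y : ℝ => ∫ z in c..y, β z with hFdef
  have hFc : ∀ a : ℝ, l < a → a ≤ c → ContinuousOn F (Icc a c) := by
    intro a ha hac
    have h := intervalIntegral.continuousOn_primitive_interval'
      (hβII a c ha hac hcr) (a := c) (by rw [uIcc_of_le hac]; exact right_mem_Icc.2 hac)
    rwa [uIcc_of_le hac] at h
  -- interval integrability of exp ∘ F on subintervals of (l, c]
  have hfII : ∀ a b : ℝ, l < a → a ≤ b → b ≤ c →
      IntervalIntegrable (fun y => Real.exp (F y)) volume a b := by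
    intro a b ha hab hbc
    have hcont : ContinuousOn (fun y => Real.exp (F y)) (Icc a b) :=
      Real.continuous_exp.comp_continuousOn
        ((hFc a ha (hab.trans hbc)).mono (Icc_subset_Icc le_rfl hbc))
    exact (hcont.mono (by rw [uIcc_of_le hab])).intervalIntegrable
  -- the key K-bound
  have hIK : ∀ y : ℝ, l < y → y ≤ m → ∫ z in y..m, (z - l) * (β z) ^ 2 ≤ K := by
    intro y hy hym
    rw [intervalIntegral.integral_of_le hym]
    have hmeas : Measurable (fun z : ℝ => (z - l) * (β z) ^ 2) :=
      (measurable_id.sub_const l).mul (hβ.pow_const 2)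
    have hnn : 0 ≤ᵐ[volume.restrict (Ioc y m)] fun z => (z - l) * (β z) ^ 2 := by
      refine (ae_restrict_iff' measurableSet_Ioc).2 (ae_of_all _ fun z hz => ?_)
      exact mul_nonneg (by linarith [hz.1]) (sq_nonneg _)
    rw [MeasureTheory.integral_eq_lintegral_of_nonneg_ae hnn
      hmeas.aestronglyMeasurable.restrict]
    refine ENNReal.toReal_mono hne ?_
    calc ∫⁻ z in Ioc y m, ENNReal.ofReal ((z - l) * (β z) ^ 2)
        ≤ ∫⁻ z in Ioo l (l + ε) ∪ {l + ε}, ENNReal.ofReal ((z - l) * (β z) ^ 2) := by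
          refine lintegral_mono_set fun z hz => ?_
          rcases lt_or_eq_of_le (hz.2.trans hmle) with h | h
          · exact Or.inl ⟨hy.trans hz.1, h⟩
          · exact Or.inr h
      _ ≤ (∫⁻ z in Ioo l (l + ε), ENNReal.ofReal ((z - l) * (β z) ^ 2))
            + ∫⁻ z in ({l + ε} : Set ℝ), ENNReal.ofReal ((z - l) * (β z) ^ 2) :=
          lintegral_union_le _ _ _
      _ = ∫⁻ z in Ioo l (l + ε), ENNReal.ofReal ((z - l) * (β z) ^ 2) := by
          rw [setLIntegral_measure_zero _ _ (measure_singleton _), add_zero]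
  set C := |∫ z in m..c, β z| with hCdef
  -- pointwise bound on F
  have hptF : ∀ y : ℝ, l < y → y ≤ m →
      F y ≤ (Real.log (m - l) - Real.log (y - l)) / 2 + K / 2 + C := by
    intro y hy hym
    have hym' : IntervalIntegrable β volume y m := hβII y m hy hym hmr
    have hmc' : IntervalIntegrable β volume m c := hβII m c hlm hmc.le hcr
    have hsplit : (∫ z in y..c, β z) = (∫ z in y..m, β z) + ∫ z in m..c, β z :=
      (intervalIntegral.integral_add_adjacent_intervals hym' hmc').symm
    have h1 : F y ≤ |∫ z in y..m, β z| + C := by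
      have : F y = -(∫ z in y..c, β z) := intervalIntegral.integral_symm y c
      rw [this, hsplit]
      calc -((∫ z in y..m, β z) + ∫ z in m..c, β z)
          ≤ |(∫ z in y..m, β z) + ∫ z in m..c, β z| := neg_le_abs _
        _ ≤ |∫ z in y..m, β z| + |∫ z in m..c, β z| := abs_add_le _ _
    have h2 : |∫ z in y..m, β z| ≤ ∫ z in y..m, |β z| :=
      intervalIntegral.abs_integral_le_integral_abs hym
    -- compare |β| with the AM-GM majorant
    have hinv : ContinuousOn (fun z : ℝ => (z - l)⁻¹) (Icc y m) := by
      refine ((continuous_id.sub continuous_const).continuousOn).inv₀ fun z hz => ?_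
      intro h
      change z - l = 0 at h
      linarith [hy.trans_le hz.1]
    have hinvII : IntervalIntegrable (fun z : ℝ => (z - l)⁻¹) volume y m :=
      (hinv.mono (by rw [uIcc_of_le hym])).intervalIntegrable
    have hb2II : IntervalIntegrable (fun z : ℝ => (β z) ^ 2) volume y m := by
      have h : IntegrableOn (fun z : ℝ => (β z) ^ 2) (uIcc y m) volume := by
        rw [uIcc_of_le hym]; exact hloc y m hy hym hmr
      exact h.intervalIntegrable
    have hzb2II : IntervalIntegrable (fun z : ℝ => (z - l) * (β z) ^ 2) volume y m :=
      hb2II.continuousOn_mul ((continuous_id.sub continuous_const).continuousOn)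
    have hgII : IntervalIntegrable
        (fun z : ℝ => ((z - l)⁻¹ + (z - l) * (β z) ^ 2) / 2) volume y m :=
      (hinvII.add hzb2II).div_const 2
    have h3 : (∫ z in y..m, |β z|) ≤ ∫ z in y..m, ((z - l)⁻¹ + (z - l) * (β z) ^ 2) / 2 := by
      refine intervalIntegral.integral_mono_on hym hym'.abs hgII fun z hz => ?_
      have hzl : 0 < z - l := by linarith [hy.trans_le hz.1]
      have key : 2 * (z - l) * |β z| ≤ 1 + (z - l) ^ 2 * (β z) ^ 2 := by
        nlinarith [sq_nonneg ((z - l) * |β z| - 1), sq_abs (β z)]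
      have h2t : (0:ℝ) < 2 * (z - l) := by linarith
      have hdiv := (div_le_div_iff_of_pos_right h2t).2 key
      have e1 : 2 * (z - l) * |β z| / (2 * (z - l)) = |β z| := by field_simp
      have e2 : (1 + (z - l) ^ 2 * (β z) ^ 2) / (2 * (z - l))
          = ((z - l)⁻¹ + (z - l) * (β z) ^ 2) / 2 := by
        field_simp
      rw [e1, e2] at hdiv
      exact hdiv
    have h4 : (∫ z in y..m, ((z - l)⁻¹ + (z - l) * (β z) ^ 2) / 2)
        = ((∫ z in y..m, (z - l)⁻¹) + ∫ z in y..m, (z - l) * (β z) ^ 2) / 2 := by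
      rw [intervalIntegral.integral_div, intervalIntegral.integral_add hinvII hzb2II]
    have h5 : (∫ z in y..m, (z - l)⁻¹) = Real.log (m - l) - Real.log (y - l) := by
      have hcomp : (∫ z in y..m, (z - l)⁻¹) = ∫ u in y - l..m - l, u⁻¹ :=
        intervalIntegral.integral_comp_sub_right (fun u => u⁻¹) l
      rw [hcomp, integral_inv, Real.log_div (by linarith) (by linarith)]
      rw [uIcc_of_le (by linarith : y - l ≤ m - l)]
      rintro ⟨h0, -⟩; linarith
    have h6 := hIK y hy hym
    linarith
  set D := Real.exp (K / 2 + C) * (m - l) ^ ((1:ℝ)/2) with hDdef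
  have hDnn : 0 ≤ D := mul_nonneg (Real.exp_pos _).le (Real.rpow_nonneg (by linarith) _)
  have hexp : ∀ y : ℝ, l < y → y ≤ m →
      Real.exp (F y) ≤ D * (y - l) ^ (-(1:ℝ)/2) := by
    intro y hy hym
    have hml : (0:ℝ) < m - l := by linarith
    have hyl : (0:ℝ) < y - l := by linarith
    rw [hDdef, Real.rpow_def_of_pos hml, Real.rpow_def_of_pos hyl, ← Real.exp_add,
      ← Real.exp_add]
    refine Real.exp_le_exp.2 ?_
    have := hptF y hy hym
    calc F y ≤ (Real.log (m - l) - Real.log (y - l)) / 2 + K / 2 + C := this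
      _ = K / 2 + C + Real.log (m - l) * ((1:ℝ)/2) + Real.log (y - l) * (-(1:ℝ)/2) := by ring
  set B := ∫ y in m..c, Real.exp (F y) with hBdef
  set M := D * (2 * (m - l) ^ ((1:ℝ)/2)) + B with hMdef
  have hM : ∀ x ∈ Ioo l m, -M ≤ s x := by
    rintro x ⟨hlx, hxm⟩
    have hsx : s x = ∫ y in c..x, Real.exp (F y) := hs x ⟨hlx, by linarith⟩
    rw [intervalIntegral.integral_symm x c] at hsx
    have hxmII : IntervalIntegrable (fun y => Real.exp (F y)) volume x m :=
      hfII x m hlx hxm.le hmc.le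
    have hmcII : IntervalIntegrable (fun y => Real.exp (F y)) volume m c :=
      hfII m c hlm hmc.le le_rfl
    have hsplit : (∫ y in x..c, Real.exp (F y))
        = (∫ y in x..m, Real.exp (F y)) + B :=
      (intervalIntegral.integral_add_adjacent_intervals hxmII hmcII).symm
    have hrpowII : IntervalIntegrable (fun y : ℝ => D * (y - l) ^ (-(1:ℝ)/2)) volume x m := by
      have h : IntervalIntegrable (fun u : ℝ => u ^ (-(1:ℝ)/2)) volume (x - l) (m - l) :=
        intervalIntegral.intervalIntegrable_rpow' (by norm_num)
      have h2 := (h.comp_sub_right l).const_mul D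
      simpa using h2
    have hmono : (∫ y in x..m, Real.exp (F y))
        ≤ ∫ y in x..m, D * (y - l) ^ (-(1:ℝ)/2) := by
      refine intervalIntegral.integral_mono_on hxm.le hxmII hrpowII fun y hy => ?_
      exact hexp y (hlx.trans_le hy.1) hy.2
    have hcomp : (∫ y in x..m, D * (y - l) ^ (-(1:ℝ)/2))
        = D * ((m - l) ^ ((1:ℝ)/2) - (x - l) ^ ((1:ℝ)/2)) / ((1:ℝ)/2) := by
      rw [intervalIntegral.integral_const_mul]
      have h1 : (∫ y in x..m, (y - l) ^ (-(1:ℝ)/2))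
          = ∫ u in x - l..m - l, u ^ (-(1:ℝ)/2) :=
        intervalIntegral.integral_comp_sub_right (fun u => u ^ (-(1:ℝ)/2)) l
      rw [h1, integral_rpow (Or.inl (by norm_num))]
      norm_num
      ring
    have hle2 : (∫ y in x..m, Real.exp (F y)) ≤ D * (2 * (m - l) ^ ((1:ℝ)/2)) := by
      refine hmono.trans ?_
      rw [hcomp]
      have hxl : (0:ℝ) ≤ (x - l) ^ ((1:ℝ)/2) := Real.rpow_nonneg (by linarith) _
      have hml : (0:ℝ) ≤ (m - l) ^ ((1:ℝ)/2) := Real.rpow_nonneg (by linarith) _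
      have : D * ((m - l) ^ ((1:ℝ)/2) - (x - l) ^ ((1:ℝ)/2)) ≤ D * (m - l) ^ ((1:ℝ)/2) :=
        mul_le_mul_of_nonneg_left (by linarith) hDnn
      have hD2 : 0 ≤ D * (m - l) ^ ((1:ℝ)/2) := mul_nonneg hDnn hml
      calc D * ((m - l) ^ ((1:ℝ)/2) - (x - l) ^ ((1:ℝ)/2)) / ((1:ℝ)/2)
          = 2 * (D * ((m - l) ^ ((1:ℝ)/2) - (x - l) ^ ((1:ℝ)/2))) := by ring
        _ ≤ 2 * (D * (m - l) ^ ((1:ℝ)/2)) := by linarith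
        _ = D * (2 * (m - l) ^ ((1:ℝ)/2)) := by ring
    rw [hsx, hsplit]
    simp only [hMdef]
    linarith
  -- final contradiction
  have h1 : ∀ᶠ x in nhdsWithin l (Ioi l), s x ≤ -(M + 1) :=
    hsl.eventually (eventually_le_atBot _)
  have h2 : Ioo l m ∈ nhdsWithin l (Ioi l) :=
    Ioo_mem_nhdsGT_of_mem ⟨le_refl l, hlm⟩
  obtain ⟨x, hx1, hx2⟩ := (h1.and (eventually_of_mem h2 fun x hx => hx)).exists
  linarith [hM x hx2]
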